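/- Let d ∈ (0, 1], a = (−d, 0), b = (d, 0), and let p = (x, y) with x, y ≥ 0. Define p_a as the point on the ray from p through a with x-coordinate −(2−d), and p_b as the point on the ray from p through b with x-coordinate 2−d (this requires x < d). If ‖p p_a‖ ≤ 2d, then ‖p p_b‖ ≤ ‖p p_a‖. -/

import Mathlib

noncomputable def pt (x y : ℝ) : EuclideanSpace ℝ (Fin 2) := WithLp.toLp 2 ![x, y]

set_option maxHeartbeats 1000000 in
lemma key (s t y : ℝ) (ht : 0 < t) (hts : t ≤ s) (hst : s + t ≤ 2)
    (hq : (2-t)^2*(s^2+y^2) ≤ (s+t)^2*s^2) :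
    (2-s)^2*s^2*(t^2+y^2) ≤ (2-t)^2*t^2*(s^2+y^2) := by
  have hs0 : 0 < s := lt_of_lt_of_le ht hts
  have hst0 : (0:ℝ) ≤ s - t := by linarith
  have h2st : (0:ℝ) ≤ 2 - s - t := by linarith
  have ht0 : (0:ℝ) ≤ t := ht.le
  have hsum : (0:ℝ) ≤ s*(2-s)+t*(2-t) := by
    have a1 : (0:ℝ) ≤ s*(2-s) := mul_nonneg hs0.le (by linarith)
    have a2 : (0:ℝ) ≤ t*(2-t) := mul_nonneg ht0 (by linarith)
    linarith
  have hK : (0:ℝ) ≤ (s-t)*(2-s-t)*(s*(2-s)+t*(2-t)) :=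
    mul_nonneg (mul_nonneg hst0 h2st) hsum
  have m1 : (0:ℝ) ≤ (s-t)^2*(2-s-t)^3 := by positivity
  have m2 : (0:ℝ) ≤ (s-t)*(2-s-t)^3 := by positivity
  have m3 : (0:ℝ) ≤ t*(2-s-t)^2 := by positivity
  have m4 : (0:ℝ) ≤ t^2*(2-s-t)^3 := by positivity
  have m5 : (0:ℝ) ≤ t^4*(s-t) := by positivity
  have m6 : (0:ℝ) ≤ t^5 := by positivity
  have m7 : (0:ℝ) ≤ t*(s-t)*(2-s-t)^3 := by positivity
  have m8 : (0:ℝ) ≤ t*(2-s-t)^3 := by positivity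
  have m9 : (0:ℝ) ≤ t^2*(s-t)^3 := by positivity
  have m10 : (0:ℝ) ≤ t*(s-t)*(2-s-t)^2 := by positivity
  have m11 : (0:ℝ) ≤ t^3*(s-t)^2 := by positivity
  have hQ : (s+2*t-2)*(s+2)*((2-s-t)*(s*(2-s)+t*(2-t))) ≤ t^2*(2-t)^2*(4-s-t) := by
    linarith [m1,m2,m3,m4,m5,m6,m7,m8,m9,m10,m11]
  have hP : ((s+t)^2-(2-t)^2) * ((s-t)*(2-s-t)*(s*(2-s)+t*(2-t))) ≤ (2-t)^2*t^2*((s-t)*(4-s-t)) := by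
    have := mul_le_mul_of_nonneg_left hQ hst0
    linarith [this]
  have hq' : (2-t)^2*y^2 ≤ s^2*((s+t)^2-(2-t)^2) := by linarith [hq]
  have h1 := mul_le_mul_of_nonneg_right hq' hK
  have h2 := mul_le_mul_of_nonneg_left hP (sq_nonneg s)
  have hc : (2-t)^2 * (y^2*((s-t)*(2-s-t)*(s*(2-s)+t*(2-t)))) ≤ (2-t)^2 * (t^2*s^2*((s-t)*(4-s-t))) := by
    linarith [h1, h2]
  have h2tp : (0:ℝ) < (2-t)^2 := pow_pos (by linarith) 2
  have h3 := le_of_mul_le_mul_left hc h2tp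
  linarith [h3]

set_option maxHeartbeats 1000000 in
/-- Let `0 < d ≤ 1`, `a = (−d,0)`, `b = (d,0)`, and `p = (x,y)` with
`x, y ≥ 0`, `x < d`. Let `p_a` be the point on the ray from `p` through `a` with
x-coordinate `−(2−d)` and `p_b` the point on the ray from `p` through `b` with
x-coordinate `2−d`. If `‖p p_a‖ ≤ 2d`, then `‖p p_b‖ ≤ ‖p p_a‖`. -/
theorem stmt_2 (d x y : ℝ) (hd0 : 0 < d) (hd1 : d ≤ 1)
    (hx : 0 ≤ x) (hy : 0 ≤ y) (hxd : x < d)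
    (p a b pa pb : EuclideanSpace ℝ (Fin 2))
    (hp : p = pt x y) (ha : a = pt (-d) 0) (hb : b = pt d 0)
    (hpa : pa = p + ((x + 2 - d) / (x + d)) • (a - p))
    (hpb : pb = p + ((2 - d - x) / (d - x)) • (b - p))
    (hshort : dist p pa ≤ 2 * d) :
    dist p pb ≤ dist p pa := by
  have hs0 : (0:ℝ) < x + d := by linarith
  have ht0 : (0:ℝ) < d - x := by linarith
  have hca : (0:ℝ) ≤ (x + 2 - d) / (x + d) := by
    apply div_nonneg <;> linarith
  have hcb : (0:ℝ) ≤ (2 - d - x) / (d - x) := by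
    apply div_nonneg <;> linarith
  have hdap : dist a p = Real.sqrt ((x+d)^2 + y^2) := by
    rw [ha, hp, EuclideanSpace.dist_eq]
    simp [pt, Fin.sum_univ_two, Real.dist_eq, sq_abs]
    try congr 1
    try ring
  have hdbp : dist b p = Real.sqrt ((d-x)^2 + y^2) := by
    rw [hb, hp, EuclideanSpace.dist_eq]
    simp [pt, Fin.sum_univ_two, Real.dist_eq, sq_abs]
    try congr 1
    try ring
  have h1 : dist p pa = ((x + 2 - d) / (x + d)) * dist a p := by
    rw [hpa, dist_eq_norm]
    have h : p - (p + ((x + 2 - d) / (x + d)) • (a - p))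
        = ((x + 2 - d) / (x + d)) • (p - a) := by module
    rw [h, norm_smul, Real.norm_eq_abs, abs_of_nonneg hca, ← dist_eq_norm, dist_comm]
  have h2 : dist p pb = ((2 - d - x) / (d - x)) * dist b p := by
    rw [hpb, dist_eq_norm]
    have h : p - (p + ((2 - d - x) / (d - x)) • (b - p))
        = ((2 - d - x) / (d - x)) • (p - b) := by module
    rw [h, norm_smul, Real.norm_eq_abs, abs_of_nonneg hcb, ← dist_eq_norm, dist_comm]
  set A := Real.sqrt ((x+d)^2 + y^2) with hAdef
  set B := Real.sqrt ((d-x)^2 + y^2) with hBdef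
  have hA0 : 0 ≤ A := Real.sqrt_nonneg _
  have hB0 : 0 ≤ B := Real.sqrt_nonneg _
  have hA2 : A^2 = (x+d)^2 + y^2 := Real.sq_sqrt (by positivity)
  have hB2 : B^2 = (d-x)^2 + y^2 := Real.sq_sqrt (by positivity)
  rw [h1, hdap] at hshort
  rw [h1, h2, hdap, hdbp]
  -- constraint squared
  have hshort' : (x + 2 - d) * A ≤ (2*d) * (x+d) := by
    rw [div_mul_eq_mul_div, div_le_iff₀ hs0] at hshort
    linarith
  have hq : (2-(d-x))^2*((d+x)^2+y^2) ≤ ((d+x)+(d-x))^2*(d+x)^2 := by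
    have hl : 0 ≤ (x + 2 - d) * A := by
      apply mul_nonneg _ hA0; linarith
    have hq2 : ((x+2-d)*A)^2 ≤ (2*d*(x+d))^2 := pow_le_pow_left₀ hl hshort' 2
    rw [mul_pow, hA2] at hq2
    linarith [hq2]
  have hkey := key (d+x) (d-x) y ht0 (by linarith) (by linarith) hq
  -- deduce (2-(d+x)) * (d+x) * B ≤ (2-(d-x)) * (d-x) * A
  have e1 : ((2-(d+x))*(d+x)*B)^2 = (2-(d+x))^2*(d+x)^2*((d-x)^2+y^2) := by
    rw [mul_pow, mul_pow, hB2]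
  have e2 : ((2-(d-x))*(d-x)*A)^2 = (2-(d-x))^2*(d-x)^2*((d+x)^2+y^2) := by
    rw [mul_pow, mul_pow, hA2]; ring
  have hsq : ((2-(d+x))*(d+x)*B)^2 ≤ ((2-(d-x))*(d-x)*A)^2 := by
    rw [e1, e2]; exact hkey
  have hmain : (2-(d+x))*(d+x)*B ≤ (2-(d-x))*(d-x)*A := by
    have hl : 0 ≤ (2-(d+x))*(d+x)*B := by
      apply mul_nonneg (mul_nonneg (by linarith) (by linarith)) hB0
    have hr : 0 ≤ (2-(d-x))*(d-x)*A := by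
      apply mul_nonneg (mul_nonneg (by linarith) (by linarith)) hA0
    have h := Real.sqrt_le_sqrt hsq
    rwa [Real.sqrt_sq hl, Real.sqrt_sq hr] at h
  rw [div_mul_eq_mul_div, div_mul_eq_mul_div, div_le_div_iff₀ ht0 hs0]
  linarith [hmain]
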